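/- Let K be a field, A a finite dimensional K-algebra, 𝒯 a torsion class and ℱ a torsion-free class in mod A. Then the following conditions are equivalent: (a) 𝒯 and ℱ are numerically disjoint; (b) cone 𝒯 ∩ cone ℱ = {0}; (c) the cone C = {x − y : x ∈ cone 𝒯, y ∈ cone ℱ} ⊆ ℝ^n is strongly convex, i.e., C ∩ (−C) = {0}. -/

import Mathlib

namespace TorsPaper

variable (A : Type) [Ring A]

/-- `N` is (isomorphic to) a factor module of `M`. -/
def IsQuotientOf (N M : ModuleCat.{0} A) : Prop :=
  ∃ f : M →ₗ[A] N, Function.Surjective f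

/-- `L` is (isomorphic to) a submodule of `M`. -/
def IsSubmoduleOf (L M : ModuleCat.{0} A) : Prop :=
  ∃ f : L →ₗ[A] M, Function.Injective f

/-- `M` is a nonzero module. -/
def Nonzero (M : ModuleCat.{0} A) : Prop := ∃ x : M, x ≠ 0

/-- A torsion class in `mod A`: a class of finitely generated modules, containing the zero
modules, closed under isomorphisms (which follows from `quot`), factor modules and
extensions. -/
structure IsTorsionClass (T : ModuleCat.{0} A → Prop) : Prop where
  fin : ∀ M, T M → Module.Finite A M
  zero : ∀ M : ModuleCat.{0} A, (∀ x : M, x = 0) → T M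
  quot : ∀ M N : ModuleCat.{0} A, T M → Module.Finite A N → IsQuotientOf A N M → T N
  ext : ∀ M : ModuleCat.{0} A, Module.Finite A M → ∀ N : Submodule A M,
    T (ModuleCat.of A N) → T (ModuleCat.of A (M ⧸ N)) → T M

/-- A torsion-free class in `mod A`. -/
structure IsTorsionFreeClass (F : ModuleCat.{0} A → Prop) : Prop where
  fin : ∀ M, F M → Module.Finite A M
  zero : ∀ M : ModuleCat.{0} A, (∀ x : M, x = 0) → F M
  sub : ∀ M N : ModuleCat.{0} A, F M → Module.Finite A N → IsSubmoduleOf A N M → F N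
  ext : ∀ M : ModuleCat.{0} A, Module.Finite A M → ∀ N : Submodule A M,
    F (ModuleCat.of A N) → F (ModuleCat.of A (M ⧸ N)) → F M

/-- The right Hom-perpendicular class `T^⊥` inside `mod A`. -/
def rightPerp (T : ModuleCat.{0} A → Prop) : ModuleCat.{0} A → Prop :=
  fun X => Module.Finite A X ∧ ∀ M : ModuleCat.{0} A, T M → ∀ f : M →ₗ[A] X, f = 0

/-- The smallest torsion class containing a class `S` of modules. -/
def torsClosure (S : ModuleCat.{0} A → Prop) : ModuleCat.{0} A → Prop :=
  fun X => ∀ T : ModuleCat.{0} A → Prop, IsTorsionClass A T → (∀ Y, S Y → T Y) → T X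

/-- The smallest torsion-free class containing a class `S` of modules. -/
def torfClosure (S : ModuleCat.{0} A → Prop) : ModuleCat.{0} A → Prop :=
  fun X => ∀ F : ModuleCat.{0} A → Prop, IsTorsionFreeClass A F → (∀ Y, S Y → F Y) → F X

/-- A torsion class is compact if it is the smallest torsion class containing a single
module `M`. -/
def IsCompactTors (T : ModuleCat.{0} A → Prop) : Prop :=
  ∃ M : ModuleCat.{0} A, Module.Finite A M ∧ T = torsClosure A (fun X => X = M)

/-- A torsion class is cocompact if `T^⊥` is the smallest torsion-free class containing a
single module `N`. -/
def IsCocompactTors (T : ModuleCat.{0} A → Prop) : Prop :=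
  ∃ N : ModuleCat.{0} A, Module.Finite A N ∧ rightPerp A T = torfClosure A (fun X => X = N)

/-- A torsion class is bicompact if it is both compact and cocompact. -/
def IsBicompactTors (T : ModuleCat.{0} A → Prop) : Prop :=
  IsCompactTors A T ∧ IsCocompactTors A T

/-- A class `C` of modules is functorially finite in `mod A` if every finitely generated
module has a left `C`-approximation and a right `C`-approximation. -/
def FunctoriallyFinite (C : ModuleCat.{0} A → Prop) : Prop :=
  (∀ M : ModuleCat.{0} A, Module.Finite A M →
    ∃ (X : ModuleCat.{0} A) (f : M →ₗ[A] X), C X ∧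
      ∀ Y : ModuleCat.{0} A, C Y → ∀ g : M →ₗ[A] Y, ∃ h : X →ₗ[A] Y, h.comp f = g) ∧
  (∀ M : ModuleCat.{0} A, Module.Finite A M →
    ∃ (X : ModuleCat.{0} A) (f : X →ₗ[A] M), C X ∧
      ∀ Y : ModuleCat.{0} A, C Y → ∀ g : Y →ₗ[A] M, ∃ h : Y →ₗ[A] X, f.comp h = g)

/-- A stability function: a real-valued function on `mod A` which is additive on short
exact sequences. -/
def IsStability (θ : ModuleCat.{0} A → ℝ) : Prop :=
  ∀ L M N : ModuleCat.{0} A, Module.Finite A L → Module.Finite A M → Module.Finite A N →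
    ∀ (f : L →ₗ[A] M) (g : M →ₗ[A] N), Function.Injective f → Function.Surjective g →
      LinearMap.range f = LinearMap.ker g → θ M = θ L + θ N

/-- The semistable torsion class `T_θ`. -/
def tTheta (θ : ModuleCat.{0} A → ℝ) : ModuleCat.{0} A → Prop :=
  fun M => Module.Finite A M ∧ ∀ N : ModuleCat.{0} A, Module.Finite A N →
    IsQuotientOf A N M → Nonzero A N → 0 < θ N

/-- The semistable torsion class `\bar T_θ`. -/
def tThetaBar (θ : ModuleCat.{0} A → ℝ) : ModuleCat.{0} A → Prop :=
  fun M => Module.Finite A M ∧ ∀ N : ModuleCat.{0} A, Module.Finite A N →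
    IsQuotientOf A N M → 0 ≤ θ N

/-- The semistable torsion-free class `F_θ`. -/
def fTheta (θ : ModuleCat.{0} A → ℝ) : ModuleCat.{0} A → Prop :=
  fun M => Module.Finite A M ∧ ∀ L : ModuleCat.{0} A, Module.Finite A L →
    IsSubmoduleOf A L M → Nonzero A L → θ L < 0

/-- The semistable torsion-free class `\bar F_θ`. -/
def fThetaBar (θ : ModuleCat.{0} A → ℝ) : ModuleCat.{0} A → Prop :=
  fun M => Module.Finite A M ∧ ∀ L : ModuleCat.{0} A, Module.Finite A L →
    IsSubmoduleOf A L M → θ L ≤ 0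

/-- An integer-valued function on `mod A` additive on short exact sequences; these are
exactly the group homomorphisms `K0(mod A) → ℤ`. -/
def IsAdditiveZ (φ : ModuleCat.{0} A → ℤ) : Prop :=
  ∀ L M N : ModuleCat.{0} A, Module.Finite A L → Module.Finite A M → Module.Finite A N →
    ∀ (f : L →ₗ[A] M) (g : M →ₗ[A] N), Function.Injective f → Function.Surjective g →
      LinearMap.range f = LinearMap.ker g → φ M = φ L + φ N

/-- `[X] = [Y]` in the Grothendieck group `K0(mod A)`: since `K0(mod A)` is free abelian
on the simple modules, this holds iff all additive `ℤ`-valued functions agree on `X`, `Y`. -/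
def SameK0Class (X Y : ModuleCat.{0} A) : Prop :=
  ∀ φ : ModuleCat.{0} A → ℤ, IsAdditiveZ A φ → φ X = φ Y

/-- Two classes of modules are numerically disjoint if they contain no nonzero `X`, `Y`
with `[X] = [Y] ≠ 0` in `K0(mod A)`. -/
def NumericallyDisjoint (C D : ModuleCat.{0} A → Prop) : Prop :=
  ¬ ∃ X Y : ModuleCat.{0} A, C X ∧ D Y ∧ Nonzero A X ∧ Nonzero A Y ∧ SameK0Class A X Y

/-- A brick: a finitely generated module whose endomorphism algebra is a division algebra,
i.e. `M` is nonzero and every nonzero endomorphism is invertible. -/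
def IsBrick (M : ModuleCat.{0} A) : Prop :=
  Module.Finite A M ∧ Nonzero A M ∧ ∀ f : M →ₗ[A] M, f ≠ 0 → Function.Bijective f

/-- A semibrick: a set of pairwise Hom-orthogonal bricks. -/
def IsSemibrick (S : Set (ModuleCat.{0} A)) : Prop :=
  (∀ M ∈ S, IsBrick A M) ∧
    ∀ M ∈ S, ∀ N ∈ S, M ≠ N → ∀ f : M →ₗ[A] N, f = 0




/-- Data identifying `K0(mod A)` with `ℤ^n`: a complete family `S` of pairwise
non-isomorphic simple modules together with the dimension-vector function `d`,
characterized by additivity on short exact sequences and `d (S i) = eᵢ`. -/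
structure DimData (n : ℕ) (S : Fin n → ModuleCat.{0} A)
    (d : ModuleCat.{0} A → (Fin n → ℤ)) : Prop where
  simple : ∀ i, IsSimpleModule A (S i)
  fin : ∀ i, Module.Finite A (S i)
  complete : ∀ M : ModuleCat.{0} A, Module.Finite A M → IsSimpleModule A M →
    ∃ i, Nonempty (M ≃ₗ[A] S i)
  distinct : ∀ i j, Nonempty ((S i) ≃ₗ[A] (S j)) → i = j
  additive : ∀ L M N : ModuleCat.{0} A, Module.Finite A L → Module.Finite A M →
    Module.Finite A N → ∀ (f : L →ₗ[A] M) (g : M →ₗ[A] N), Function.Injective f →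
      Function.Surjective g → LinearMap.range f = LinearMap.ker g → d M = d L + d N
  basis : ∀ i, d (S i) = Pi.single i 1

/-- The convex cone in `ℝ^n` generated by a set `S`. -/
def coneGen (n : ℕ) (S : Set (Fin n → ℝ)) : Set (Fin n → ℝ) :=
  { x | ∃ (m : ℕ) (c : Fin m → ℝ) (v : Fin m → (Fin n → ℝ)),
      (∀ i, 0 ≤ c i) ∧ (∀ i, v i ∈ S) ∧ x = ∑ i, c i • v i }

/-- The set of (real) dimension vectors of the modules in a class `C`. -/
def dimVecSet (n : ℕ) (d : ModuleCat.{0} A → (Fin n → ℤ)) (C : ModuleCat.{0} A → Prop) :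
    Set (Fin n → ℝ) :=
  { x | ∃ M : ModuleCat.{0} A, C M ∧ x = fun i => ((d M i : ℤ) : ℝ) }

/-- `cone C`: the convex cone generated by the dimension vectors of the modules in `C`. -/
def cone (n : ℕ) (d : ModuleCat.{0} A → (Fin n → ℤ)) (C : ModuleCat.{0} A → Prop) :
    Set (Fin n → ℝ) :=
  coneGen n (dimVecSet A n d C)

/-- A class `C` is polyhedral if `cone C` is a finitely generated (polyhedral) cone. -/
def IsPolyhedral (n : ℕ) (d : ModuleCat.{0} A → (Fin n → ℤ))
    (C : ModuleCat.{0} A → Prop) : Prop :=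
  ∃ (m : ℕ) (v : Fin m → (Fin n → ℝ)), cone A n d C = coneGen n (Set.range v)


/-- The cone `C = cone 𝒯 - cone ℱ` of differences. -/
def diffCone (n : ℕ) (d : ModuleCat.{0} A → (Fin n → ℤ))
    (T F : ModuleCat.{0} A → Prop) : Set (Fin n → ℝ) :=
  { z | ∃ x ∈ cone A n d T, ∃ y ∈ cone A n d F, z = x - y }


/-! ### Auxiliary lemmas -/

open Finset in
theorem my_dense_rat_ker {ι ρ : Type} [Fintype ι] [Fintype ρ] (U : Matrix ρ ι ℚ) (a : ι → ℝ)
    (ha : ∀ r, ∑ t, (U r t : ℝ) * a t = 0) (ε : ℝ) (hε : 0 < ε) :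
    ∃ b : ι → ℚ, (∀ r, ∑ t, U r t * b t = 0) ∧ ∀ t, |(b t : ℝ) - a t| < ε := by
  classical
  set B := Module.Basis.ofVectorSpace ℚ ℝ with hB
  set g : ι → _ →₀ ℚ := fun t => B.repr (a t) with hg
  set Sf : Finset _ := Finset.univ.biUnion (fun t => (g t).support) with hSf
  have hsub : ∀ t, (g t).support ⊆ Sf := fun t β hβ =>
    Finset.mem_biUnion.2 ⟨t, Finset.mem_univ t, hβ⟩
  have key1 : ∀ β r, ∑ t, U r t * g t β = 0 := by
    intro β r
    have h0 : ∑ t, (U r t) • (a t) = (0:ℝ) := by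
      simpa [Rat.smul_def] using ha r
    have h1 := congrArg (fun x => (B.repr x) β) h0
    simpa [map_sum, map_smul, Finsupp.smul_apply, smul_eq_mul] using h1
  have key2 : ∀ t, a t = ∑ β ∈ Sf, (g t β : ℝ) * (B β : ℝ) := by
    intro t
    have h1 : Finsupp.linearCombination ℚ B (B.repr (a t)) = a t := B.linearCombination_repr _
    rw [Finsupp.linearCombination_apply] at h1
    calc a t = (g t).sum fun β c => c • (B β) := h1.symm
      _ = ∑ β ∈ Sf, (g t β) • (B β) :=
          Finsupp.sum_of_support_subset _ (hsub t) _ (fun β _ => zero_smul _ _)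
      _ = ∑ β ∈ Sf, (g t β : ℝ) * (B β : ℝ) :=
          Finset.sum_congr rfl fun β _ => Rat.smul_def _ _
  set C : ℝ := ∑ β ∈ Sf, ∑ t, |(g t β : ℝ)| with hC
  have hC0 : 0 ≤ C := Finset.sum_nonneg fun β _ => Finset.sum_nonneg fun t _ => abs_nonneg _
  set δ : ℝ := ε / (C + 1) with hδ
  have hδ0 : 0 < δ := div_pos hε (by linarith)
  have hq : ∀ β : ↥(Module.Basis.ofVectorSpaceIndex ℚ ℝ), ∃ qq : ℚ, |(B β : ℝ) - qq| < δ :=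
    fun β => exists_rat_near _ hδ0
  choose q hqd using hq
  refine ⟨fun t => ∑ β ∈ Sf, q β * g t β, ?_, ?_⟩
  · intro r
    have hcomm : ∑ t, U r t * ∑ β ∈ Sf, q β * g t β
        = ∑ β ∈ Sf, q β * ∑ t, U r t * g t β := by
      simp_rw [Finset.mul_sum]
      rw [Finset.sum_comm]
      exact Finset.sum_congr rfl fun β _ => Finset.sum_congr rfl fun t _ => by ring
    rw [hcomm]
    simp [key1]
  · intro t
    have hval : (((fun t => ∑ β ∈ Sf, q β * g t β) t : ℚ) : ℝ) - a t
        = ∑ β ∈ Sf, (g t β : ℝ) * ((q β : ℝ) - (B β : ℝ)) := by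
      rw [key2 t]
      push_cast
      rw [← Finset.sum_sub_distrib]
      exact Finset.sum_congr rfl fun β _ => by ring
    rw [hval]
    calc |∑ β ∈ Sf, (g t β : ℝ) * ((q β : ℝ) - (B β : ℝ))|
        ≤ ∑ β ∈ Sf, |(g t β : ℝ)| * |(q β : ℝ) - (B β : ℝ)| := by
          refine (Finset.abs_sum_le_sum_abs _ _).trans_eq ?_
          exact Finset.sum_congr rfl fun β _ => abs_mul _ _
      _ ≤ ∑ β ∈ Sf, |(g t β : ℝ)| * δ := by
          refine Finset.sum_le_sum fun β _ => ?_
          exact mul_le_mul_of_nonneg_left (by rw [abs_sub_comm]; exact (hqd β).le) (abs_nonneg _)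
      _ = (∑ β ∈ Sf, |(g t β : ℝ)|) * δ := by rw [← Finset.sum_mul]
      _ < (C + 1) * δ := by
          refine mul_lt_mul_of_pos_right ?_ hδ0
          have h1 : ∑ β ∈ Sf, |(g t β : ℝ)| ≤ C := by
            rw [hC]
            exact Finset.sum_le_sum fun β _ =>
              Finset.single_le_sum (f := fun t' => |(g t' β : ℝ)|)
                (fun t' _ => abs_nonneg _) (Finset.mem_univ t)
          linarith
      _ = ε := by rw [hδ]; field_simp

theorem my_rat_scale {ι : Type} [Fintype ι] (b : ι → ℚ) (hb : ∀ t, 0 ≤ b t) :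
    ∃ (Nn : ℕ) (k : ι → ℕ), 0 < Nn ∧ ∀ t, (k t : ℚ) = Nn * b t := by
  classical
  refine ⟨∏ t, (b t).den, fun t => ((∏ s, (b s).den) / (b t).den) * (b t).num.toNat, ?_, ?_⟩
  · exact Finset.prod_pos fun t _ => (b t).pos
  · intro t
    have hdvd : (b t).den ∣ ∏ s, (b s).den := Finset.dvd_prod_of_mem _ (Finset.mem_univ t)
    obtain ⟨c, hc⟩ := hdvd
    have hcden : (∏ s, (b s).den) / (b t).den = c := by
      rw [hc]; exact Nat.mul_div_cancel_left c (b t).pos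
    have hnum : (0:ℤ) ≤ (b t).num := Rat.num_nonneg.2 (hb t)
    have hdenne : ((b t).den : ℚ) ≠ 0 := Nat.cast_ne_zero.2 (b t).den_nz
    have hden : ((b t).den : ℚ) * b t = (b t).num := by
      rw [mul_comm]
      exact ((div_eq_iff hdenne).1 (Rat.num_div_den (b t))).symm
    show ((((∏ s, (b s).den) / (b t).den) * (b t).num.toNat : ℕ) : ℚ) = _
    rw [hcden, hc]
    push_cast
    have htn : (((b t).num.toNat : ℕ) : ℚ) = ((b t).num : ℚ) := by
      exact_mod_cast Int.toNat_of_nonneg hnum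
    rw [htn]
    calc (c : ℚ) * (b t).num = c * (((b t).den : ℚ) * b t) := by rw [hden]
      _ = ((b t).den : ℚ) * c * b t := by ring

variable {A}

/-- the zero module -/
def zeroMod : ModuleCat.{0} A := ModuleCat.of A PUnit

instance : Subsingleton (zeroMod (A := A)) := inferInstanceAs (Subsingleton PUnit)

instance : Module.Finite A (zeroMod (A := A)) := by
  have : Function.Surjective (0 : A →ₗ[A] PUnit) := fun x => ⟨0, Subsingleton.elim _ _⟩
  exact Module.Finite.of_surjective _ this

lemma zeroMod_zero : ∀ x : zeroMod (A := A), x = 0 := fun _ => Subsingleton.elim _ _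

variable {n : ℕ} {S : Fin n → ModuleCat.{0} A} {d : ModuleCat.{0} A → (Fin n → ℤ)}

lemma DimData.d_of_subsingleton (hd : DimData A n S d) (M : ModuleCat.{0} A)
    (h : ∀ x : M, x = 0) : d M = 0 := by
  haveI : Subsingleton M := ⟨fun a b => (h a).trans (h b).symm⟩
  haveI : Module.Finite A M := by
    have : Function.Surjective (0 : A →ₗ[A] M) := fun x => ⟨0, Subsingleton.elim _ _⟩
    exact Module.Finite.of_surjective _ this
  have := hd.additive M M M ‹_› ‹_› ‹_› LinearMap.id LinearMap.id
    (fun a b h => h) (fun x => ⟨x, rfl⟩)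
    (Subsingleton.elim _ _)
  funext i
  have h2 := congrFun this i
  simp only [Pi.add_apply, Pi.zero_apply] at h2 ⊢
  omega

lemma DimData.nonzero_of_d_ne_zero (hd : DimData A n S d) {M : ModuleCat.{0} A}
    (h : d M ≠ 0) : Nonzero A M := by
  by_contra hc
  refine h (hd.d_of_subsingleton M ?_)
  intro x
  by_contra hx
  exact hc ⟨x, hx⟩

lemma DimData.d_iso (hd : DimData A n S d) {M N : ModuleCat.{0} A}
    (hM : Module.Finite A M) (e : M ≃ₗ[A] N) : d M = d N := by
  haveI : Module.Finite A N := Module.Finite.equiv e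
  have := hd.additive M N (zeroMod (A := A)) ‹_› ‹_› inferInstance e.toLinearMap 0
    e.injective (fun x => ⟨0, Subsingleton.elim _ _⟩)
    (by rw [LinearMap.ker_zero]; exact LinearEquiv.range e)
  rw [this, hd.d_of_subsingleton (zeroMod (A := A)) zeroMod_zero, add_zero]

lemma DimData.d_sub_add_quot (hd : DimData A n S d) (hnoe : IsNoetherianRing A)
    (M : ModuleCat.{0} A) (hM : Module.Finite A M) (N : Submodule A M) :
    d M = d (ModuleCat.of A N) + d (ModuleCat.of A (M ⧸ N)) := by
  haveI := hnoe
  haveI : IsNoetherian A M := inferInstance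
  haveI : Module.Finite A N := Module.Finite.iff_fg.2 (IsNoetherian.noetherian N)
  haveI : Module.Finite A (M ⧸ N) := Module.Finite.quotient A N
  exact hd.additive (ModuleCat.of A N) M (ModuleCat.of A (M ⧸ N)) ‹_› ‹_› ‹_›
    N.subtype N.mkQ N.injective_subtype N.mkQ_surjective
    (by rw [Submodule.range_subtype, Submodule.ker_mkQ])

lemma DimData.d_prod (hd : DimData A n S d) {M N : ModuleCat.{0} A}
    (hM : Module.Finite A M) (hN : Module.Finite A N) :
    d (ModuleCat.of A (M × N)) = d M + d N := by
  haveI : Module.Finite A (M × N) := Module.Finite.prod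
  have := hd.additive M (ModuleCat.of A (M × N)) N hM ‹_› hN
    (LinearMap.inl A M N) (LinearMap.snd A M N)
    LinearMap.inl_injective Prod.snd_surjective
    (LinearMap.range_inl A M N)
  rw [this]

section Field

attribute [local instance] RestrictScalars.moduleOrig

lemma my_noeth (K : Type) [Field K] [Algebra K A] [FiniteDimensional K A] :
    IsNoetherianRing A := isNoetherian_of_tower K inferInstance
lemma my_artin (K : Type) [Field K] [Algebra K A] [FiniteDimensional K A] :
    IsArtinianRing A := IsArtinianRing.of_finite K A

variable (A)

/-- `K`-dimension of a module, via restriction of scalars. -/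
noncomputable def kdim (K : Type) [Field K] [Algebra K A] (M : ModuleCat.{0} A) : ℕ :=
  Module.finrank K (RestrictScalars K A M)

variable {A}
variable (K : Type) [Field K] [Algebra K A] [FiniteDimensional K A]

lemma kdim_quot_lt (M : ModuleCat.{0} A) (hM : Module.Finite A M) (L : Submodule A M)
    (hL : L ≠ ⊥) : kdim A K (ModuleCat.of A (M ⧸ L)) < kdim A K M := by
  letI : AddCommMonoid (RestrictScalars K A M) := AddCommGroup.toAddCommMonoid
  letI : Module A (RestrictScalars K A M) := RestrictScalars.moduleOrig K A M
  letI : Module K (RestrictScalars K A M) := RestrictScalars.module K A M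
  haveI : IsScalarTower K A (RestrictScalars K A M) := RestrictScalars.isScalarTower K A M
  letI : AddCommMonoid (RestrictScalars K A (M ⧸ L)) := AddCommGroup.toAddCommMonoid
  letI : Module A (RestrictScalars K A (M ⧸ L)) := RestrictScalars.moduleOrig K A (M ⧸ L)
  letI : Module K (RestrictScalars K A (M ⧸ L)) := RestrictScalars.module K A (M ⧸ L)
  haveI : IsScalarTower K A (RestrictScalars K A (M ⧸ L)) := RestrictScalars.isScalarTower K A (M ⧸ L)
  haveI : Module.Finite A (RestrictScalars K A M) := hM
  haveI : Module.Finite K (RestrictScalars K A M) := Module.Finite.trans A _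
  haveI : Module.Finite A (RestrictScalars K A (M ⧸ L)) := Module.Finite.quotient A L
  haveI : Module.Finite K (RestrictScalars K A (M ⧸ L)) := Module.Finite.trans A _
  let f : RestrictScalars K A M →ₗ[K] RestrictScalars K A (M ⧸ L) :=
    { toFun := fun x => L.mkQ (RestrictScalars.addEquiv K A M x)
      map_add' := fun x y => by simp; rfl
      map_smul' := fun k x => by
        simp only [RingHom.id_apply]
        show L.mkQ (algebraMap K A k • (RestrictScalars.addEquiv K A M x)) = _
        rw [map_smul]
        rfl }
  have hsurj : Function.Surjective f := fun y => by
    obtain ⟨x, hx⟩ := L.mkQ_surjective (RestrictScalars.addEquiv K A (M ⧸ L) y)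
    exact ⟨x, hx⟩
  have hrange : Module.finrank K (LinearMap.range f) =
      Module.finrank K (RestrictScalars K A (M ⧸ L)) := by
    rw [LinearMap.range_eq_top.2 hsurj]; exact finrank_top K _
  have hkerpos : 0 < Module.finrank K (LinearMap.ker f) := by
    obtain ⟨x, hxL, hx0⟩ := Submodule.exists_mem_ne_zero_of_ne_bot hL
    have hmem : (x : RestrictScalars K A M) ∈ LinearMap.ker f := by
      change f x = 0
      show L.mkQ x = 0
      rw [Submodule.mkQ_apply, Submodule.Quotient.mk_eq_zero]
      exact hxL
    haveI : Nontrivial (LinearMap.ker f) :=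
      ⟨⟨x, hmem⟩, 0, fun h => hx0 (congrArg Subtype.val h)⟩
    exact Module.finrank_pos
  have := LinearMap.finrank_range_add_finrank_ker f
  have h2 : kdim A K (ModuleCat.of A (M ⧸ L)) =
      Module.finrank K (RestrictScalars K A (M ⧸ L)) := rfl
  have h3 : kdim A K M = Module.finrank K (RestrictScalars K A M) := rfl
  omega

lemma kdim_pos (M : ModuleCat.{0} A) (hM : Module.Finite A M) (x : M) (hx : x ≠ 0) :
    0 < kdim A K M := by
  letI : AddCommMonoid (RestrictScalars K A M) := AddCommGroup.toAddCommMonoid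
  letI : Module A (RestrictScalars K A M) := RestrictScalars.moduleOrig K A M
  letI : Module K (RestrictScalars K A M) := RestrictScalars.module K A M
  haveI : IsScalarTower K A (RestrictScalars K A M) := RestrictScalars.isScalarTower K A M
  haveI : Module.Finite A (RestrictScalars K A M) := hM
  haveI : Module.Finite K (RestrictScalars K A M) := Module.Finite.trans A _
  haveI : Nontrivial (RestrictScalars K A M) := ⟨x, 0, hx⟩
  exact (Module.finrank_pos : 0 < Module.finrank K (RestrictScalars K A M))

lemma DimData.d_nonneg_aux (hd : DimData A n S d) :
    ∀ (nn : ℕ) (M : ModuleCat.{0} A), Module.Finite A M → kdim A K M ≤ nn →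
      (∀ i, 0 ≤ d M i) ∧ ((∃ x : M, x ≠ 0) → d M ≠ 0) := by
  intro nn
  induction nn with
  | zero =>
    intro M hM hk
    by_cases hz : ∀ x : M, x = 0
    · rw [hd.d_of_subsingleton M hz]
      exact ⟨fun i => le_refl 0, fun ⟨x, hx⟩ => absurd (hz x) hx⟩
    · push_neg at hz
      obtain ⟨x, hx⟩ := hz
      exact absurd hk (by have := kdim_pos K M hM x hx; omega)
  | succ nn ih =>
    intro M hM hk
    by_cases hz : ∀ x : M, x = 0
    · rw [hd.d_of_subsingleton M hz]
      exact ⟨fun i => le_refl 0, fun ⟨x, hx⟩ => absurd (hz x) hx⟩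
    push_neg at hz
    obtain ⟨x, hx⟩ := hz
    haveI : Nontrivial M := ⟨x, 0, hx⟩
    haveI := my_artin (A := A) K
    haveI := my_noeth (A := A) K
    haveI : IsArtinian A M := inferInstance
    haveI : IsAtomic (Submodule A M) := isAtomic_of_orderBot_wellFounded_lt wellFounded_lt
    rcases IsAtomic.eq_bot_or_exists_atom_le (⊤ : Submodule A M) with htop | ⟨L, hL, -⟩
    · exact absurd htop top_ne_bot
    haveI : IsSimpleModule A L := isSimpleModule_iff_isAtom.2 hL
    haveI : IsNoetherian A M := inferInstance
    haveI hLfin : Module.Finite A L := Module.Finite.iff_fg.2 (IsNoetherian.noetherian L)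
    obtain ⟨i, ⟨e⟩⟩ := hd.complete (ModuleCat.of A L) hLfin ‹IsSimpleModule A ↥L›
    have hdL : d (ModuleCat.of A L) = Pi.single i 1 := by
      rw [hd.d_iso hLfin e, hd.basis i]
    have hdM := hd.d_sub_add_quot ‹_› M hM L
    have hklt := kdim_quot_lt K M hM L hL.1
    obtain ⟨hq1, -⟩ := ih (ModuleCat.of A (M ⧸ L)) (Module.Finite.quotient A L) (by omega)
    constructor
    · intro j
      have := hq1 j
      have hsj : (0:ℤ) ≤ (Pi.single i 1 : Fin n → ℤ) j := by
        by_cases hij : i = j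
        · subst hij; simp
        · simp [Pi.single_apply, hij]
      rw [hdL] at hdM
      have := congrFun hdM j
      simp only [Pi.add_apply] at this
      omega
    · intro _
      intro h0
      have := congrFun hdM i
      rw [h0, hdL] at this
      simp only [Pi.zero_apply, Pi.add_apply, Pi.single_eq_same] at this
      have := hq1 i
      omega

end Field

lemma DimData.d_nonneg (hd : DimData A n S d) (K : Type) [Field K] [Algebra K A]
    [FiniteDimensional K A] (M : ModuleCat.{0} A)
    (hM : Module.Finite A M) : ∀ i, 0 ≤ d M i :=
  (hd.d_nonneg_aux K (kdim A K M) M hM le_rfl).1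

lemma DimData.d_ne_zero (hd : DimData A n S d) (K : Type) [Field K] [Algebra K A]
    [FiniteDimensional K A] (M : ModuleCat.{0} A)
    (hM : Module.Finite A M) (h : Nonzero A M) : d M ≠ 0 :=
  (hd.d_nonneg_aux K (kdim A K M) M hM le_rfl).2 h

/-! ### Closure of torsion(-free) classes under finite direct sums -/

lemma IsTorsionClass.prod_mem {T : ModuleCat.{0} A → Prop} (hT : IsTorsionClass A T)
    {M N : ModuleCat.{0} A} (hM : T M) (hN : T N) : T (ModuleCat.of A (M × N)) := by
  haveI := hT.fin M hM
  haveI := hT.fin N hN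
  haveI hPfin : Module.Finite A (M × N) := Module.Finite.prod
  set P := ModuleCat.of A (M × N) with hP
  haveI : Module.Finite A P := hPfin
  set Sub : Submodule A P := LinearMap.range (LinearMap.inl A M N) with hSub
  have h1 : T (ModuleCat.of A Sub) := by
    refine hT.quot M (ModuleCat.of A Sub) hM ?_ ?_
    · exact Module.Finite.of_surjective (LinearMap.inl A M N).rangeRestrict
        (LinearMap.surjective_rangeRestrict _)
    · exact ⟨(LinearMap.inl A M N).rangeRestrict, LinearMap.surjective_rangeRestrict _⟩
  have h2 : T (ModuleCat.of A (P ⧸ Sub)) := by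
    refine hT.quot N (ModuleCat.of A (P ⧸ Sub)) hN (Module.Finite.quotient A Sub) ?_
    refine ⟨Sub.mkQ.comp (LinearMap.inr A M N), ?_⟩
    intro q
    obtain ⟨⟨a, b⟩, rfl⟩ := Sub.mkQ_surjective q
    refine ⟨b, ?_⟩
    simp only [LinearMap.coe_comp, Function.comp_apply, Submodule.mkQ_apply]
    refine (Submodule.Quotient.eq Sub).2 ?_
    rw [hSub]
    refine ⟨-a, ?_⟩
    show (-a, (0:N)) = ((0:M), b) - (a, b)
    rw [Prod.mk_sub_mk]
    simp
  exact hT.ext P hPfin Sub h1 h2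

lemma IsTorsionFreeClass.prod_mem {F : ModuleCat.{0} A → Prop} (hF : IsTorsionFreeClass A F)
    {M N : ModuleCat.{0} A} (hM : F M) (hN : F N) : F (ModuleCat.of A (M × N)) := by
  haveI := hF.fin M hM
  haveI := hF.fin N hN
  haveI hPfin : Module.Finite A (M × N) := Module.Finite.prod
  set P := ModuleCat.of A (M × N) with hP
  haveI : Module.Finite A P := hPfin
  set Sub : Submodule A P := LinearMap.range (LinearMap.inl A M N) with hSub
  have h1 : F (ModuleCat.of A Sub) := by
    refine hF.sub M (ModuleCat.of A Sub) hM ?_ ?_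
    · exact Module.Finite.of_surjective (LinearMap.inl A M N).rangeRestrict
        (LinearMap.surjective_rangeRestrict _)
    · refine ⟨(LinearMap.fst A M N).comp Sub.subtype, ?_⟩
      intro x y hxy
      have hxy' : (x.1).1 = (y.1).1 := hxy
      obtain ⟨a, ha⟩ := x.2
      obtain ⟨b, hb⟩ := y.2
      apply Subtype.ext
      rw [← ha, ← hb] at hxy' ⊢
      have hab : a = b := hxy'
      rw [hab]
  have h2 : F (ModuleCat.of A (P ⧸ Sub)) := by
    refine hF.sub N (ModuleCat.of A (P ⧸ Sub)) hN (Module.Finite.quotient A Sub) ?_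
    have hle : Sub ≤ LinearMap.ker (LinearMap.snd A M N) := by
      rintro x ⟨a, rfl⟩
      exact LinearMap.mem_ker.2 rfl
    have hge : LinearMap.ker (LinearMap.snd A M N) ≤ Sub := by
      rw [hSub, LinearMap.range_inl A M N]
    refine ⟨Sub.liftQ (LinearMap.snd A M N) hle, ?_⟩
    rw [← LinearMap.ker_eq_bot]
    exact Submodule.ker_liftQ_eq_bot Sub _ hle hge
  exact hF.ext P hPfin Sub h1 h2

lemma exists_d_sum (hd : DimData A n S d) (G : ModuleCat.{0} A → Prop)
    (hzero : ∀ M : ModuleCat.{0} A, (∀ x : M, x = 0) → G M)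
    (hfin : ∀ M, G M → Module.Finite A M)
    (hprod : ∀ M N : ModuleCat.{0} A, G M → G N → G (ModuleCat.of A (M × N))) :
    ∀ (p : ℕ) (Ms : Fin p → ModuleCat.{0} A) (b : Fin p → ℕ), (∀ t, G (Ms t)) →
      ∃ X, G X ∧ d X = ∑ t, (b t : ℤ) • d (Ms t) := by
  have hpow : ∀ (M : ModuleCat.{0} A), G M → ∀ (k : ℕ),
      ∃ X, G X ∧ d X = (k : ℤ) • d M := by
    intro M hM k
    induction k with
    | zero =>
      refine ⟨zeroMod, hzero _ zeroMod_zero, ?_⟩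
      rw [hd.d_of_subsingleton _ zeroMod_zero]
      simp
    | succ k ih =>
      obtain ⟨X, hX, hdX⟩ := ih
      refine ⟨ModuleCat.of A (X × M), hprod X M hX hM, ?_⟩
      rw [hd.d_prod (hfin X hX) (hfin M hM), hdX]
      push_cast
      rw [add_smul, one_smul]
  intro p
  induction p with
  | zero =>
    intro Ms b hG
    refine ⟨zeroMod, hzero _ zeroMod_zero, ?_⟩
    rw [hd.d_of_subsingleton _ zeroMod_zero]
    simp
  | succ p ih =>
    intro Ms b hG
    obtain ⟨X1, hX1, hdX1⟩ := ih (fun t => Ms t.succ) (fun t => b t.succ) (fun t => hG t.succ)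
    obtain ⟨X2, hX2, hdX2⟩ := hpow (Ms 0) (hG 0) (b 0)
    refine ⟨ModuleCat.of A (X2 × X1), hprod X2 X1 hX2 hX1, ?_⟩
    rw [hd.d_prod (hfin X2 hX2) (hfin X1 hX1), hdX1, hdX2, Fin.sum_univ_succ]

/-! ### Cone lemmas -/

lemma zero_mem_coneGen {m : ℕ} (S' : Set (Fin m → ℝ)) : (0 : Fin m → ℝ) ∈ coneGen m S' :=
  ⟨0, Fin.elim0, Fin.elim0, fun i => i.elim0, fun i => i.elim0, by simp⟩

lemma add_mem_coneGen {m : ℕ} {S' : Set (Fin m → ℝ)} {x y : Fin m → ℝ}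
    (hx : x ∈ coneGen m S') (hy : y ∈ coneGen m S') : x + y ∈ coneGen m S' := by
  obtain ⟨m1, c1, v1, hc1, hv1, rfl⟩ := hx
  obtain ⟨m2, c2, v2, hc2, hv2, rfl⟩ := hy
  refine ⟨m1 + m2, Fin.append c1 c2, Fin.append v1 v2, ?_, ?_, ?_⟩
  · intro i
    refine Fin.addCases (fun j => ?_) (fun j => ?_) i
    · simpa [Fin.append_left] using hc1 j
    · simpa [Fin.append_right] using hc2 j
  · intro i
    refine Fin.addCases (fun j => ?_) (fun j => ?_) i
    · simpa [Fin.append_left] using hv1 j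
    · simpa [Fin.append_right] using hv2 j
  · rw [Fin.sum_univ_add]
    congr 1
    · exact Finset.sum_congr rfl fun i _ => by rw [Fin.append_left, Fin.append_left]
    · exact Finset.sum_congr rfl fun i _ => by rw [Fin.append_right, Fin.append_right]

lemma dimvec_mem_cone {C : ModuleCat.{0} A → Prop} {M : ModuleCat.{0} A}
    (hC : C M) (dd : ModuleCat.{0} A → (Fin n → ℤ)) :
    (fun i => ((dd M i : ℤ) : ℝ)) ∈ cone A n dd C := by
  refine ⟨1, fun _ => 1, fun _ => (fun i => ((dd M i : ℤ) : ℝ)), fun _ => zero_le_one,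
    fun _ => ⟨M, hC, rfl⟩, ?_⟩
  simp

lemma cone_nonneg (hd : DimData A n S d) (K : Type) [Field K] [Algebra K A]
    [FiniteDimensional K A] {C : ModuleCat.{0} A → Prop}
    (hfin : ∀ M, C M → Module.Finite A M) {x : Fin n → ℝ}
    (hx : x ∈ cone A n d C) : ∀ i, 0 ≤ x i := by
  obtain ⟨m, c, v, hc, hv, rfl⟩ := hx
  intro i
  rw [Finset.sum_apply]
  refine Finset.sum_nonneg fun t _ => ?_
  obtain ⟨M, hM, hvM⟩ := hv t
  rw [Pi.smul_apply, hvM, smul_eq_mul]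
  have := hd.d_nonneg K M (hfin M hM) i
  have : (0:ℝ) ≤ ((d M i : ℤ) : ℝ) := by exact_mod_cast this
  exact mul_nonneg (hc t) this

/-! ### The key construction for (a) ⟹ (b) -/

lemma key_inter (hd : DimData A n S d) (K : Type) [Field K] [Algebra K A]
    [FiniteDimensional K A] {T F : ModuleCat.{0} A → Prop}
    (hT : IsTorsionClass A T) (hF : IsTorsionFreeClass A F) {x : Fin n → ℝ}
    (hxT : x ∈ cone A n d T) (hxF : x ∈ cone A n d F) (hx0 : x ≠ 0) :
    ∃ X Y : ModuleCat.{0} A, T X ∧ F Y ∧ Nonzero A X ∧ Nonzero A Y ∧ d X = d Y := by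
  classical
  obtain ⟨m1, c1, v1, hc1, hv1, hxe1⟩ := hxT
  obtain ⟨m2, c2, v2, hc2, hv2, hxe2⟩ := hxF
  choose Ms hMs hvs using hv1
  choose Ns hNs hws using hv2
  set ι := Sum (Fin m1) (Fin m2) with hι
  set a : ι → ℝ := Sum.elim c1 c2 with haa
  have ha0 : ∀ t, 0 ≤ a t := by
    rintro (t | t)
    · exact hc1 t
    · exact hc2 t
  set U : Matrix (Sum (Fin n) ι) ι ℚ :=
    Sum.elim
      (fun i => Sum.elim (fun t1 => ((d (Ms t1) i : ℤ) : ℚ)) (fun t2 => -((d (Ns t2) i : ℤ) : ℚ)))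
      (fun s t => if s = t ∧ a s = 0 then 1 else 0) with hU
  have hxv1 : ∀ i, x i = ∑ t1, c1 t1 * ((d (Ms t1) i : ℤ) : ℝ) := by
    intro i
    rw [hxe1, Finset.sum_apply]
    exact Finset.sum_congr rfl fun t1 _ => by rw [Pi.smul_apply, hvs t1, smul_eq_mul]
  have hxv2 : ∀ i, x i = ∑ t2, c2 t2 * ((d (Ns t2) i : ℤ) : ℝ) := by
    intro i
    rw [hxe2, Finset.sum_apply]
    exact Finset.sum_congr rfl fun t2 _ => by rw [Pi.smul_apply, hws t2, smul_eq_mul]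
  have haU : ∀ r, ∑ t, (U r t : ℝ) * a t = 0 := by
    rintro (i | s)
    · rw [Fintype.sum_sum_type]
      have e1 : ∑ t1 : Fin m1, ((U (Sum.inl i) (Sum.inl t1) : ℚ) : ℝ) * a (Sum.inl t1)
          = x i := by
        rw [hxv1 i]
        refine Finset.sum_congr rfl fun t1 _ => ?_
        simp only [hU, Sum.elim_inl, haa]
        push_cast
        ring
      have e2 : ∑ t2 : Fin m2, ((U (Sum.inl i) (Sum.inr t2) : ℚ) : ℝ) * a (Sum.inr t2)
          = -(x i) := by
        rw [hxv2 i, ← Finset.sum_neg_distrib]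
        refine Finset.sum_congr rfl fun t2 _ => ?_
        simp only [hU, Sum.elim_inl, Sum.elim_inr, haa]
        push_cast
        ring
      rw [e1, e2]
      ring
    · by_cases has : a s = 0
      · have : ∀ t, ((U (Sum.inr s) t : ℚ) : ℝ) * a t = if s = t then a t else 0 := by
          intro t
          simp only [hU, Sum.elim_inr, has, and_true]
          by_cases hst : s = t
          · simp [hst]
          · simp [hst]
        rw [Finset.sum_congr rfl fun t _ => this t]
        rw [Finset.sum_ite_eq]
        simp [has]
      · have : ∀ t, ((U (Sum.inr s) t : ℚ) : ℝ) * a t = 0 := by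
          intro t
          simp only [hU, Sum.elim_inr, has, and_false, if_false]
          simp
        rw [Finset.sum_congr rfl fun t _ => this t]
        simp
  -- positive support
  have hxne : ∃ i0, x i0 ≠ 0 := by
    by_contra hc
    push_neg at hc
    exact hx0 (funext hc)
  obtain ⟨i0, hi0⟩ := hxne
  have hterm : ∃ t1, c1 t1 * ((d (Ms t1) i0 : ℤ) : ℝ) ≠ 0 := by
    by_contra hc
    push_neg at hc
    exact hi0 (by rw [hxv1 i0]; exact Finset.sum_eq_zero fun t1 _ => hc t1)
  obtain ⟨t10, ht10⟩ := hterm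
  have hc10 : c1 t10 ≠ 0 := fun h => ht10 (by rw [h, zero_mul])
  have hd10 : d (Ms t10) i0 ≠ 0 := by
    intro h
    exact ht10 (by rw [h]; simp)
  classical
  set Pf : Finset ι := Finset.univ.filter (fun t => a t ≠ 0) with hPf
  have hPfne : Pf.Nonempty := ⟨Sum.inl t10, by simp [hPf, haa, hc10]⟩
  set ε : ℝ := Pf.inf' hPfne a with hε
  have hεpos : 0 < ε := by
    rw [hε, Finset.lt_inf'_iff]
    intro t ht
    rw [hPf, Finset.mem_filter] at ht
    exact lt_of_le_of_ne (ha0 t) (Ne.symm ht.2)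
  obtain ⟨b, hbker, hbapprox⟩ := my_dense_rat_ker U a haU ε hεpos
  have hbz : ∀ t, a t = 0 → b t = 0 := by
    intro t hat
    have := hbker (Sum.inr t)
    have hrow : ∀ t', U (Sum.inr t) t' * b t' = if t = t' then b t' else 0 := by
      intro t'
      simp only [hU, Sum.elim_inr, hat, and_true]
      by_cases hst : t = t'
      · simp [hst]
      · simp [hst]
    rw [Finset.sum_congr rfl fun t' _ => hrow t', Finset.sum_ite_eq] at this
    simpa using this
  have hbpos : ∀ t, a t ≠ 0 → 0 < b t := by
    intro t hat
    have htP : t ∈ Pf := by simp [hPf, hat]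
    have hle : ε ≤ a t := Finset.inf'_le a htP
    have := hbapprox t
    have : (0:ℝ) < (b t : ℝ) := by
      have habs := abs_lt.1 (hbapprox t)
      linarith [habs.1]
    exact_mod_cast this
  have hbnn : ∀ t, 0 ≤ b t := by
    intro t
    by_cases hat : a t = 0
    · rw [hbz t hat]
    · exact (hbpos t hat).le
  obtain ⟨Nn, k, hNn, hk⟩ := my_rat_scale b hbnn
  -- the row equations give equality of scaled dimension vectors
  have hrowq : ∀ i, ∑ t1, ((d (Ms t1) i : ℤ) : ℚ) * b (Sum.inl t1)
      = ∑ t2, ((d (Ns t2) i : ℤ) : ℚ) * b (Sum.inr t2) := by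
    intro i
    have := hbker (Sum.inl i)
    rw [Fintype.sum_sum_type] at this
    have e1 : ∀ t1 : Fin m1, U (Sum.inl i) (Sum.inl t1) * b (Sum.inl t1)
        = ((d (Ms t1) i : ℤ) : ℚ) * b (Sum.inl t1) := fun t1 => by
      simp only [hU, Sum.elim_inl]
    have e2 : ∀ t2 : Fin m2, U (Sum.inl i) (Sum.inr t2) * b (Sum.inr t2)
        = -(((d (Ns t2) i : ℤ) : ℚ) * b (Sum.inr t2)) := fun t2 => by
      simp only [hU, Sum.elim_inl, Sum.elim_inr]
      ring
    rw [Finset.sum_congr rfl fun t1 _ => e1 t1, Finset.sum_congr rfl fun t2 _ => e2 t2,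
      Finset.sum_neg_distrib] at this
    linarith [this]
  have hkey : (∑ t1, (k (Sum.inl t1) : ℤ) • d (Ms t1))
      = (∑ t2, (k (Sum.inr t2) : ℤ) • d (Ns t2)) := by
    funext i
    have hq : ((∑ t1, (k (Sum.inl t1) : ℤ) • d (Ms t1)) i : ℚ)
        = ((∑ t2, (k (Sum.inr t2) : ℤ) • d (Ns t2)) i : ℚ) := by
      rw [Finset.sum_apply, Finset.sum_apply]
      simp only [Pi.smul_apply, smul_eq_mul]
      push_cast
      have eL : ∑ t1, ((k (Sum.inl t1) : ℚ)) * ((d (Ms t1) i : ℤ) : ℚ)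
          = (Nn : ℚ) * ∑ t1, ((d (Ms t1) i : ℤ) : ℚ) * b (Sum.inl t1) := by
        rw [Finset.mul_sum]
        refine Finset.sum_congr rfl fun t1 _ => ?_
        rw [hk (Sum.inl t1)]
        ring
      have eR : ∑ t2, ((k (Sum.inr t2) : ℚ)) * ((d (Ns t2) i : ℤ) : ℚ)
          = (Nn : ℚ) * ∑ t2, ((d (Ns t2) i : ℤ) : ℚ) * b (Sum.inr t2) := by
        rw [Finset.mul_sum]
        refine Finset.sum_congr rfl fun t2 _ => ?_
        rw [hk (Sum.inr t2)]
        ring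
      calc ∑ t1, ((k (Sum.inl t1) : ℚ)) * ((d (Ms t1) i : ℤ) : ℚ)
          = (Nn : ℚ) * ∑ t1, ((d (Ms t1) i : ℤ) : ℚ) * b (Sum.inl t1) := eL
        _ = (Nn : ℚ) * ∑ t2, ((d (Ns t2) i : ℤ) : ℚ) * b (Sum.inr t2) := by rw [hrowq i]
        _ = ∑ t2, ((k (Sum.inr t2) : ℚ)) * ((d (Ns t2) i : ℤ) : ℚ) := eR.symm
    exact_mod_cast hq
  -- build the modules
  obtain ⟨X, hX, hdX⟩ := exists_d_sum hd T hT.zero hT.fin (fun M N hM hN => hT.prod_mem hM hN)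
    m1 Ms (fun t1 => k (Sum.inl t1)) hMs
  obtain ⟨Y, hY, hdY⟩ := exists_d_sum hd F hF.zero hF.fin (fun M N hM hN => hF.prod_mem hM hN)
    m2 Ns (fun t2 => k (Sum.inr t2)) hNs
  have hdXY : d X = d Y := by rw [hdX, hdY, hkey]
  -- nonzero-ness
  have hk10 : 1 ≤ k (Sum.inl t10) := by
    have hb10 : 0 < b (Sum.inl t10) := hbpos _ (by simp [haa, hc10])
    by_contra hc
    push_neg at hc
    interval_cases h : k (Sum.inl t10)
    · have := hk (Sum.inl t10)
      rw [h] at this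
      simp only [Nat.cast_zero] at this
      have : (Nn : ℚ) * b (Sum.inl t10) ≠ 0 :=
        mul_ne_zero (by exact_mod_cast hNn.ne') hb10.ne'
      exact this (by linarith [hk (Sum.inl t10)])
  have hdXne : d X ≠ 0 := by
    intro h0
    have hXi0 : (d X) i0 = 0 := by rw [h0]; rfl
    rw [hdX, Finset.sum_apply] at hXi0
    have hpos : 0 < ∑ t1, ((k (Sum.inl t1) : ℤ) • d (Ms t1)) i0 := by
      refine Finset.sum_pos' (fun t1 _ => ?_) ⟨t10, Finset.mem_univ t10, ?_⟩
      · rw [Pi.smul_apply, smul_eq_mul]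
        exact mul_nonneg (by positivity) (hd.d_nonneg K (Ms t1) (hT.fin _ (hMs t1)) i0)
      · rw [Pi.smul_apply, smul_eq_mul]
        have h1 : 0 < d (Ms t10) i0 :=
          lt_of_le_of_ne (hd.d_nonneg K (Ms t10) (hT.fin _ (hMs t10)) i0) (Ne.symm hd10)
        have h2 : (0:ℤ) < (k (Sum.inl t10) : ℤ) := by exact_mod_cast hk10
        positivity
    omega
  have hdYne : d Y ≠ 0 := by rw [← hdXY]; exact hdXne
  exact ⟨X, Y, hX, hY, hd.nonzero_of_d_ne_zero hdXne, hd.nonzero_of_d_ne_zero hdYne, hdXY⟩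


/-- For a torsion class `𝒯` and a torsion-free class `ℱ`, the following
are equivalent: (a) `𝒯` and `ℱ` are numerically disjoint; (b) `cone 𝒯 ∩ cone ℱ = {0}`;
(c) the cone `C = cone 𝒯 - cone ℱ` is strongly convex, i.e. `C ∩ (-C) = {0}`. -/
theorem stmt7 (K : Type) [Field K] [Algebra K A] [FiniteDimensional K A]
    (n : ℕ) (S : Fin n → ModuleCat.{0} A) (d : ModuleCat.{0} A → (Fin n → ℤ))
    (hd : DimData A n S d)
    (T F : ModuleCat.{0} A → Prop)
    (hT : IsTorsionClass A T) (hF : IsTorsionFreeClass A F) :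
    List.TFAE [
      ¬ ∃ X Y : ModuleCat.{0} A, T X ∧ F Y ∧ Nonzero A X ∧ Nonzero A Y ∧ d X = d Y,
      cone A n d T ∩ cone A n d F = {0},
      diffCone A n d T F ∩ (-(diffCone A n d T F)) = {0}] := by
  have h0T : (0 : Fin n → ℝ) ∈ cone A n d T := zero_mem_coneGen _
  have h0F : (0 : Fin n → ℝ) ∈ cone A n d F := zero_mem_coneGen _
  tfae_have 1 → 2 := by
    intro h1
    ext x
    constructor
    · rintro ⟨hxT, hxF⟩
      rw [Set.mem_singleton_iff]
      by_contra hx0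
      exact h1 (key_inter hd K hT hF hxT hxF hx0)
    · intro hx
      rw [Set.mem_singleton_iff] at hx
      subst hx
      exact ⟨h0T, h0F⟩
  tfae_have 2 → 1 := by
    intro h2
    rintro ⟨X, Y, hX, hY, hnX, hnY, hdXY⟩
    have hmX : (fun i => ((d X i : ℤ) : ℝ)) ∈ cone A n d T := dimvec_mem_cone hX d
    have hmY : (fun i => ((d X i : ℤ) : ℝ)) ∈ cone A n d F := by
      rw [hdXY]
      exact dimvec_mem_cone hY d
    have hv0 : (fun i => ((d X i : ℤ) : ℝ)) = 0 := by
      have := Set.mem_inter hmX hmY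
      rw [h2] at this
      exact this
    have hdX0 : d X = 0 := by
      funext i
      have := congrFun hv0 i
      simp only [Pi.zero_apply] at this ⊢
      exact_mod_cast this
    exact hd.d_ne_zero K X (hT.fin X hX) hnX hdX0
  tfae_have 2 → 3 := by
    intro h2
    ext z
    constructor
    · rintro ⟨⟨x1, hx1, y1, hy1, rfl⟩, hz2⟩
      obtain ⟨x2, hx2, y2, hy2, heq⟩ := Set.mem_neg.1 hz2
      have hsum : x1 + x2 = y1 + y2 := by
        funext i
        have := congrFun heq i
        simp only [Pi.sub_apply, Pi.neg_apply, Pi.add_apply] at this ⊢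
        linarith
      have hmemT : x1 + x2 ∈ cone A n d T := add_mem_coneGen hx1 hx2
      have hmemF : x1 + x2 ∈ cone A n d F := by
        rw [hsum]
        exact add_mem_coneGen hy1 hy2
      have hzero : x1 + x2 = 0 := by
        have := Set.mem_inter hmemT hmemF
        rw [h2] at this
        exact this
      have hn1 := cone_nonneg hd K hT.fin hx1
      have hn2 := cone_nonneg hd K hT.fin hx2
      have hm1 := cone_nonneg hd K hF.fin hy1
      have hm2 := cone_nonneg hd K hF.fin hy2
      have hx10 : ∀ i, x1 i = 0 := by
        intro i
        have h := congrFun hzero i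
        simp only [Pi.add_apply, Pi.zero_apply] at h
        have := hn1 i
        have := hn2 i
        linarith
      have hy10 : ∀ i, y1 i = 0 := by
        intro i
        have h := congrFun hzero i
        rw [hsum] at h
        simp only [Pi.add_apply, Pi.zero_apply] at h
        have := hm1 i
        have := hm2 i
        linarith
      rw [Set.mem_singleton_iff]
      funext i
      simp only [Pi.sub_apply, Pi.zero_apply, hx10 i, hy10 i, sub_zero]
    · intro hz
      rw [Set.mem_singleton_iff] at hz
      subst hz
      refine ⟨⟨0, h0T, 0, h0F, by simp⟩, Set.mem_neg.2 ⟨0, h0T, 0, h0F, by simp⟩⟩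
  tfae_have 3 → 2 := by
    intro h3
    ext x
    constructor
    · rintro ⟨hxT, hxF⟩
      have h1 : x ∈ diffCone A n d T F := ⟨x, hxT, 0, h0F, by simp⟩
      have h2' : x ∈ -(diffCone A n d T F) := Set.mem_neg.2 ⟨0, h0T, x, hxF, by simp⟩
      have := Set.mem_inter h1 h2'
      rw [h3] at this
      exact this
    · intro hx
      rw [Set.mem_singleton_iff] at hx
      subst hx
      exact ⟨h0T, h0F⟩
  tfae_finish
end TorsPaper
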